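/- For every finite set U and every d ≥ 2, there exists a d-detecting family F ⊆ 2^U of size at most C·|U|·log d / log |U| for some absolute constant C (for |U| ≥ 2), i.e., a family of subsets such that any two distinct functions f, g : U → {0,...,d−1} are distinguished by some S ∈ F via differing sums ∑_{x∈S} f(x) ≠ ∑_{x∈S} g(x). -/

import Mathlib

open Finset

namespace DetectingFamily

set_option linter.unusedSectionVars false




lemma baseD_ne_zero (D : ℕ) (k : ℕ) (h : ℕ → ℤ) (hb : ∀ j, 2 * |h j| < (D : ℤ))
    (j₀ : ℕ) (hj₀ : j₀ < k) (hne : h j₀ ≠ 0) :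
    ∑ j ∈ Finset.range k, h j * (D : ℤ) ^ j ≠ 0 := by
  have hDpos : (0:ℤ) < (D:ℤ) := lt_of_le_of_lt (by positivity) (hb 0)
  induction k generalizing h j₀ with
  | zero => omega
  | succ k ih =>
    intro hsum
    rw [Finset.sum_range_succ'] at hsum
    have hdvd : (D:ℤ) ∣ ∑ i ∈ Finset.range k, h (i+1) * (D:ℤ)^(i+1) :=
      Finset.dvd_sum (fun i _ => by rw [pow_succ]; exact ⟨h (i+1) * (D:ℤ)^i, by ring⟩)
    have h00 : h 0 * (D:ℤ)^0 = h 0 := by ring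
    rw [h00] at hsum
    have hd0 : (D:ℤ) ∣ h 0 := by
      have : h 0 = -(∑ i ∈ Finset.range k, h (i+1) * (D:ℤ)^(i+1)) := by linarith
      rw [this]; exact dvd_neg.2 hdvd
    have h0z : h 0 = 0 := Int.eq_zero_of_abs_lt_dvd hd0 (by have := hb 0; omega)
    have hsum' : ∑ i ∈ Finset.range k, h (i+1) * (D:ℤ)^i = 0 := by
      have hfac : ∑ i ∈ Finset.range k, h (i+1) * (D:ℤ)^(i+1)
          = (D:ℤ) * ∑ i ∈ Finset.range k, h (i+1) * (D:ℤ)^i := by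
        rw [Finset.mul_sum]; exact Finset.sum_congr rfl (fun i _ => by rw [pow_succ]; ring)
      have : (D:ℤ) * ∑ i ∈ Finset.range k, h (i+1) * (D:ℤ)^i = 0 := by
        rw [← hfac]; linarith
      exact (mul_eq_zero.1 this).resolve_left (by positivity)
    rcases Nat.eq_zero_or_pos j₀ with rfl | hpos
    · exact hne h0z
    · obtain ⟨j, rfl⟩ : ∃ j, j₀ = j + 1 := ⟨j₀ - 1, by omega⟩
      exact ih (fun i => h (i+1)) (fun i => hb (i+1)) j (by omega) hne hsum'


section Helpers
variable {γ : Type*} [Fintype γ] [DecidableEq γ]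




/-- At least `2^(|T|-1)` even-cardinality subsets of a nonempty `T`. -/
lemma evens_card_ge (T : Finset γ) (hT : T.Nonempty) :
    2 ^ (T.card - 1) ≤ (T.powerset.filter (fun R => Even R.card)).card := by
  obtain ⟨x, hx⟩ := hT
  have hcard : ((T.erase x).powerset).card = 2 ^ (T.card - 1) := by
    rw [Finset.card_powerset, Finset.card_erase_of_mem hx]
  rw [← hcard]
  apply Finset.card_le_card_of_injOn (fun R => if Even R.card then R else insert x R)
  · intro R hR
    simp only [Finset.mem_coe, Finset.mem_powerset] at hR ⊢
    have hxR : x ∉ R := fun hc => (Finset.mem_erase.1 (hR hc)).1 rfl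
    have hRT : R ⊆ T := hR.trans (Finset.erase_subset _ _)
    by_cases he : Even R.card
    · rw [if_pos he]
      exact Finset.mem_filter.2 ⟨Finset.mem_powerset.2 hRT, he⟩
    · rw [if_neg he]
      refine Finset.mem_filter.2 ⟨Finset.mem_powerset.2 (Finset.insert_subset hx hRT), ?_⟩
      rw [Finset.card_insert_of_notMem hxR]
      rcases Nat.even_or_odd R.card with h | h
      · exact absurd h he
      · exact h.add_one
  · intro R hR R' hR' hEq
    simp only [Finset.mem_coe, Finset.mem_powerset] at hR hR'
    have hxR : x ∉ R := fun hc => (Finset.mem_erase.1 (hR hc)).1 rfl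
    have hxR' : x ∉ R' := fun hc => (Finset.mem_erase.1 (hR' hc)).1 rfl
    by_cases he : Even R.card <;> by_cases he' : Even R'.card <;>
      simp only [he, he', if_true, if_false] at hEq
    · exact hEq
    · exact absurd (hEq ▸ Finset.mem_insert_self x R') hxR
    · exact absurd (hEq ▸ Finset.mem_insert_self x R) hxR'
    · have := congrArg (fun (A : Finset γ) => Finset.erase A x) hEq
      simpa [Finset.erase_insert hxR, Finset.erase_insert hxR'] using this

/-- Number of `S` with `S ∩ T = R` (for `R ⊆ T`) is `2^(card γ - |T|)`. -/
lemma fiber_card (T R : Finset γ) (hR : R ⊆ T) :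
    ((Finset.univ : Finset (Finset γ)).filter (fun S => S ∩ T = R)).card
      = 2 ^ (Fintype.card γ - T.card) := by
  have : (Tᶜ.powerset).card = 2 ^ (Fintype.card γ - T.card) := by
    rw [Finset.card_powerset, Finset.card_compl]
  rw [← this]
  apply Finset.card_bij' (fun S _ => S \ T) (fun B _ => R ∪ B)
  · intro S hS
    rw [Finset.mem_filter] at hS
    rw [Finset.mem_powerset]
    intro y hy
    rw [Finset.mem_sdiff] at hy
    simpa using hy.2
  · intro B hB
    rw [Finset.mem_powerset] at hB
    rw [Finset.mem_filter]
    refine ⟨Finset.mem_univ _, ?_⟩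
    ext y
    simp only [Finset.mem_inter, Finset.mem_union]
    constructor
    · rintro ⟨hy | hy, hyT⟩
      · exact hy
      · exact absurd hyT (by simpa using hB hy)
    · intro hy; exact ⟨Or.inl hy, hR hy⟩
  · intro S hS
    rw [Finset.mem_filter] at hS
    ext y
    simp only [Finset.mem_union, Finset.mem_sdiff]
    constructor
    · rintro (hy | ⟨hy, _⟩)
      · have : y ∈ S ∩ T := hS.2.symm ▸ hy
        exact (Finset.mem_inter.1 this).1
      · exact hy
    · intro hy
      by_cases hyT : y ∈ T
      · left; rw [← hS.2]; exact Finset.mem_inter.2 ⟨hy, hyT⟩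
      · right; exact ⟨hy, hyT⟩
  · intro B hB
    rw [Finset.mem_powerset] at hB
    ext y
    simp only [Finset.mem_sdiff, Finset.mem_union]
    constructor
    · rintro ⟨hy | hy, hyT⟩
      · exact absurd (hR hy) hyT
      · exact hy
    · intro hy
      have : y ∉ T := by simpa using hB hy
      exact ⟨Or.inr hy, this⟩

lemma Pa_eq (T : Finset γ) (𝒞 : Finset (Finset γ)) (h𝒞 : 𝒞 ⊆ T.powerset)
    (heven : ∀ R ∈ 𝒞, Even R.card) :
    ∑ S : Finset γ, (-1:ℤ)^((S ∩ T).card) * (if S ∩ T ∈ 𝒞 then 1 else 0)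
      = 2^(Fintype.card γ - T.card) * 𝒞.card := by
  classical
  have hmaps : ∀ S ∈ (Finset.univ : Finset (Finset γ)), S ∩ T ∈ T.powerset :=
    fun S _ => Finset.mem_powerset.2 Finset.inter_subset_right
  rw [← Finset.sum_fiberwise_of_maps_to hmaps
      (fun S => (-1:ℤ)^((S ∩ T).card) * (if S ∩ T ∈ 𝒞 then 1 else 0))]
  have hstep : ∀ R ∈ T.powerset,
      (∑ S ∈ Finset.univ.filter (fun S => S ∩ T = R),
        (-1:ℤ)^((S ∩ T).card) * (if S ∩ T ∈ 𝒞 then 1 else 0))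
      = 2^(Fintype.card γ - T.card) * ((-1:ℤ)^R.card * (if R ∈ 𝒞 then 1 else 0)) := by
    intro R hR
    rw [Finset.mem_powerset] at hR
    rw [Finset.sum_congr rfl (fun S hS => by
      rw [(Finset.mem_filter.1 hS).2]), Finset.sum_const, fiber_card T R hR]
    push_cast
    ring
  rw [Finset.sum_congr rfl hstep, ← Finset.mul_sum]
  congr 1
  simp only [mul_boole]
  rw [← Finset.sum_filter, Finset.filter_mem_eq_inter,
      Finset.inter_eq_right.2 h𝒞]
  rw [Finset.sum_congr rfl (fun R hR => Even.neg_one_pow (heven R hR))]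
  rw [Finset.sum_const, nsmul_eq_mul, mul_one]

lemma Pa_zero (T₀ T : Finset γ) (x : γ) (hx₀ : x ∈ T₀) (hx : x ∉ T)
    (𝒞 : Finset (Finset γ)) :
    ∑ S : Finset γ, (-1:ℤ)^((S ∩ T₀).card) * (if S ∩ T ∈ 𝒞 then 1 else 0) = 0 := by
  classical
  apply Finset.sum_ninvolution (fun S => if x ∈ S then S.erase x else insert x S)
  · intro S
    by_cases hxS : x ∈ S
    · rw [if_pos hxS]
      have h1 : (S.erase x) ∩ T = S ∩ T := by
        ext y; simp only [Finset.mem_inter, Finset.mem_erase]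
        constructor
        · rintro ⟨⟨_, hy⟩, hyT⟩; exact ⟨hy, hyT⟩
        · rintro ⟨hy, hyT⟩; exact ⟨⟨fun h => hx (h ▸ hyT), hy⟩, hyT⟩
      have h2 : (S.erase x) ∩ T₀ = (S ∩ T₀).erase x := by
        ext y; simp only [Finset.mem_inter, Finset.mem_erase]; tauto
      have hxm : x ∈ S ∩ T₀ := Finset.mem_inter.2 ⟨hxS, hx₀⟩
      have hc : (S ∩ T₀).card = ((S ∩ T₀).erase x).card + 1 := by
        rw [Finset.card_erase_of_mem hxm]
        have := Finset.card_pos.2 ⟨x, hxm⟩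
        omega
      rw [h1, h2, hc, pow_succ]
      ring
    · rw [if_neg hxS]
      have h1 : (insert x S) ∩ T = S ∩ T := by
        ext y; simp only [Finset.mem_inter, Finset.mem_insert]
        constructor
        · rintro ⟨hy | hy, hyT⟩
          · exact absurd (hy ▸ hyT) hx
          · exact ⟨hy, hyT⟩
        · rintro ⟨hy, hyT⟩; exact ⟨Or.inr hy, hyT⟩
      have h2 : (insert x S) ∩ T₀ = insert x (S ∩ T₀) := by
        rw [Finset.insert_inter_of_mem hx₀]
      have hxm : x ∉ S ∩ T₀ := fun h => hxS (Finset.mem_inter.1 h).1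
      rw [h1, h2, Finset.card_insert_of_notMem hxm, pow_succ]
      ring
  · intro S _
    by_cases hxS : x ∈ S
    · rw [if_pos hxS]; exact fun h => (Finset.notMem_erase x S) (by rw [h]; exact hxS)
    · rw [if_neg hxS]; exact fun h => hxS (by rw [← h]; exact Finset.mem_insert_self x S)
  · intro S; exact Finset.mem_univ _
  · intro S
    by_cases hxS : x ∈ S
    · rw [if_pos hxS, if_neg (Finset.notMem_erase x S), Finset.insert_erase hxS]
    · rw [if_neg hxS, if_pos (Finset.mem_insert_self x S), Finset.erase_insert hxS]


end Helpers

lemma main_construction (α : Type) [Fintype α] [DecidableEq α] (d u k : ℕ)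
    (hd : 2 ≤ d) (hk : 1 ≤ k) (hkr : (2*d-1)^(k-1) ≤ 2^u)
    (hcap : Fintype.card α ≤ 2^(2*u) * k) :
    ∃ F : Finset (Finset α), F.card ≤ 2^(2*u+1) ∧
      ∀ f g : α → Fin d, f ≠ g →
        ∃ S ∈ F, (∑ x ∈ S, (f x : ℕ)) ≠ ∑ x ∈ S, (g x : ℕ) := by
  classical
  set t := 2*u+1 with ht
  set A : Finset (Finset (Fin t)) := Finset.univ.filter (fun T => t < 2 * T.card) with hA
  -- counting A
  have hAcard : 2^(2*u) ≤ A.card := by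
    set B : Finset (Finset (Fin t)) := Finset.univ.filter (fun T => ¬ t < 2 * T.card) with hB
    have hsum : A.card + B.card = 2^t := by
      rw [hA, hB, Finset.card_filter_add_card_filter_not]
      simp [Finset.card_univ, Fintype.card_finset, Fintype.card_fin]
    have hBA : B.card ≤ A.card := by
      apply Finset.card_le_card_of_injOn (fun T => Tᶜ)
      · intro T hT
        simp only [hB, Finset.mem_coe, Finset.mem_filter] at hT ⊢
        rw [hA, Finset.mem_filter]
        refine ⟨Finset.mem_univ _, ?_⟩
        rw [Finset.card_compl, Fintype.card_fin]
        omega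
      · intro T _ T' _ h
        exact compl_injective h
    have : 2^t = 2^(2*u) * 2 := by rw [ht, pow_succ]
    omega
  set G : Finset (Finset (Fin t) × ℕ) := A ×ˢ Finset.range k with hG
  have hGcard : Fintype.card α ≤ G.card := by
    rw [hG, Finset.card_product, Finset.card_range]
    calc Fintype.card α ≤ 2^(2*u) * k := hcap
    _ ≤ A.card * k := Nat.mul_le_mul_right k hAcard
  obtain ⟨ι, hι⟩ := Function.Embedding.exists_of_card_le_finset hGcard
  have hιmem : ∀ a : α, ι a ∈ G := fun a => hι (Set.mem_range_self a)
  set TT : α → Finset (Fin t) := fun a => (ι a).1 with hTT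
  set J : α → ℕ := fun a => (ι a).2 with hJ
  have hTTA : ∀ a, TT a ∈ A ∧ J a < k := by
    intro a
    have := hιmem a
    rw [hG, Finset.mem_product, Finset.mem_range] at this
    exact this
  have hTTcard : ∀ a, u + 1 ≤ (TT a).card := by
    intro a
    have := (hTTA a).1
    rw [hA, Finset.mem_filter] at this
    omega
  -- the chosen column sets
  set D : ℕ := 2*d - 1 with hD
  have hcond : ∀ (T : Finset (Fin t)) (j : ℕ), T ∈ A → j < k →
      D^j ≤ (T.powerset.filter (fun R => Even R.card)).card := by
    intro T j hTmem hj
    have hTcard : u + 1 ≤ T.card := by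
      rw [hA, Finset.mem_filter] at hTmem; omega
    have hTne : T.Nonempty := Finset.card_pos.1 (by omega)
    calc D^j ≤ D^(k-1) := Nat.pow_le_pow_right (by omega) (by omega)
    _ ≤ 2^u := hkr
    _ ≤ 2^(T.card - 1) := Nat.pow_le_pow_right (by omega) (by omega)
    _ ≤ _ := evens_card_ge T hTne
  set CC : Finset (Fin t) → ℕ → Finset (Finset (Fin t)) := fun T j =>
    if h : D^j ≤ (T.powerset.filter (fun R => Even R.card)).card then
      (Finset.exists_subset_card_eq h).choose else ∅ with hCC
  have hCCsub : ∀ T j, CC T j ⊆ T.powerset.filter (fun R => Even R.card) := by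
    intro T j
    rw [hCC]
    dsimp only
    split
    next h => exact (Finset.exists_subset_card_eq h).choose_spec.1
    next h => exact Finset.empty_subset _
  have hCCcard : ∀ (T : Finset (Fin t)) (j : ℕ), T ∈ A → j < k → (CC T j).card = D^j := by
    intro T j hTmem hj
    rw [hCC]
    dsimp only
    rw [dif_pos (hcond T j hTmem hj)]
    exact (Finset.exists_subset_card_eq (hcond T j hTmem hj)).choose_spec.2
  -- the family
  set M : Finset (Fin t) → Finset α := fun S =>
    Finset.univ.filter (fun a => S ∩ TT a ∈ CC (TT a) (J a)) with hM
  refine ⟨Finset.image M Finset.univ, ?_, ?_⟩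
  · calc (Finset.image M Finset.univ).card ≤ (Finset.univ : Finset (Finset (Fin t))).card :=
      Finset.card_image_le
    _ = 2^t := by simp [Finset.card_univ, Fintype.card_finset, Fintype.card_fin]
  intro f g hfg
  by_contra hcon
  push_neg at hcon
  set δ : α → ℤ := fun a => (f a : ℤ) - (g a : ℤ) with hδ
  set ind : α → Finset (Fin t) → ℤ := fun a S => if S ∩ TT a ∈ CC (TT a) (J a) then 1 else 0
    with hind
  have hΨ : ∀ S : Finset (Fin t), ∑ a : α, δ a * ind a S = 0 := by
    intro S
    have hMS := hcon (M S) (Finset.mem_image_of_mem M (Finset.mem_univ S))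
    have : ∑ a : α, δ a * ind a S = ∑ a ∈ M S, δ a := by
      rw [hM, Finset.sum_filter]
      exact Finset.sum_congr rfl (fun a _ => by rw [hind, mul_boole])
    rw [this, hδ]
    push_cast
    rw [Finset.sum_sub_distrib]
    have h1 : (∑ a ∈ M S, (f a : ℤ)) = ((∑ a ∈ M S, (f a : ℕ) : ℕ) : ℤ) := by push_cast; rfl
    have h2 : (∑ a ∈ M S, (g a : ℤ)) = ((∑ a ∈ M S, (g a : ℕ) : ℕ) : ℤ) := by push_cast; rfl
    rw [h1, h2, hMS]
    ring
  -- support and maximal element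
  set Supp : Finset α := Finset.univ.filter (fun a => δ a ≠ 0) with hSupp
  have hSne : Supp.Nonempty := by
    obtain ⟨a, ha⟩ := Function.ne_iff.1 hfg
    refine ⟨a, ?_⟩
    rw [hSupp, Finset.mem_filter]
    refine ⟨Finset.mem_univ _, ?_⟩
    intro hc
    apply ha
    have hc2 : (f a : ℤ) - (g a : ℤ) = 0 := hc
    have : (f a : ℤ) = (g a : ℤ) := by omega
    exact Fin.ext (by exact_mod_cast this)
  obtain ⟨a₀, ha₀, hmax⟩ := Finset.exists_max_image Supp (fun a => (TT a).card) hSne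
  set T₀ : Finset (Fin t) := TT a₀ with hT₀
  set P : α → ℤ := fun a => ∑ S : Finset (Fin t), (-1:ℤ)^((S ∩ T₀).card) * ind a S with hP
  have hΦ : ∑ a : α, δ a * P a = 0 := by
    have step : ∑ a : α, δ a * P a
        = ∑ S : Finset (Fin t), (-1:ℤ)^((S ∩ T₀).card) * ∑ a : α, δ a * ind a S := by
      calc ∑ a : α, δ a * P a
          = ∑ a : α, ∑ S : Finset (Fin t), δ a * ((-1:ℤ)^((S ∩ T₀).card) * ind a S) := by
            refine Finset.sum_congr rfl fun a _ => ?_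
            rw [hP]
            dsimp only
            rw [Finset.mul_sum]
        _ = ∑ S : Finset (Fin t), ∑ a : α, δ a * ((-1:ℤ)^((S ∩ T₀).card) * ind a S) :=
            Finset.sum_comm
        _ = _ := by
            refine Finset.sum_congr rfl fun S _ => ?_
            rw [Finset.mul_sum]
            exact Finset.sum_congr rfl fun a _ => by ring
    rw [step]
    rw [Finset.sum_congr rfl (fun S _ => by rw [hΨ S, mul_zero]), Finset.sum_const, smul_zero]
  -- terms with TT a ≠ T₀ vanish
  have hPzero : ∀ a ∈ Supp, TT a ≠ T₀ → P a = 0 := by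
    intro a haS hne
    by_cases hsub : T₀ ⊆ TT a
    · exact absurd (Finset.eq_of_subset_of_card_le hsub (hmax a haS)).symm hne
    · obtain ⟨x, hx₀, hx⟩ := Finset.not_subset.1 hsub
      exact Pa_zero T₀ (TT a) x hx₀ hx (CC (TT a) (J a))
  set W : Finset α := Supp.filter (fun a => TT a = T₀) with hW
  have hsplit : ∑ a ∈ W, δ a * P a = 0 := by
    have h1 := hΦ
    rw [← Finset.sum_filter_add_sum_filter_not Finset.univ (fun a => δ a ≠ 0)] at h1
    have h2 : ∑ a ∈ Finset.univ.filter (fun a => ¬ δ a ≠ 0), δ a * P a = 0 := by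
      apply Finset.sum_eq_zero
      intro a ha
      have := (Finset.mem_filter.1 ha).2
      push_neg at this
      rw [this, zero_mul]
    rw [h2, add_zero] at h1
    rw [← Finset.sum_filter_add_sum_filter_not Supp (fun a => TT a = T₀)] at h1
    have h3 : ∑ a ∈ Supp.filter (fun a => ¬ TT a = T₀), δ a * P a = 0 := by
      apply Finset.sum_eq_zero
      intro a ha
      obtain ⟨haS, hane⟩ := Finset.mem_filter.1 ha
      rw [hPzero a haS hane, mul_zero]
    rw [h3, add_zero] at h1
    exact h1
  -- evaluate P on W
  have hPeq : ∀ a ∈ W, P a = 2^(t - T₀.card) * (D:ℤ)^(J a) := by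
    intro a haW
    obtain ⟨haS, haT⟩ := Finset.mem_filter.1 haW
    have hsub : CC T₀ (J a) ⊆ T₀.powerset :=
      (hCCsub T₀ (J a)).trans (Finset.filter_subset _ _)
    have hev : ∀ R ∈ CC T₀ (J a), Even R.card := by
      intro R hR
      exact (Finset.mem_filter.1 (hCCsub T₀ (J a) hR)).2
    have h1 := Pa_eq (γ := Fin t) T₀ (CC T₀ (J a)) hsub hev
    have hPa : P a = ∑ S : Finset (Fin t),
        (-1:ℤ)^((S ∩ T₀).card) * (if S ∩ T₀ ∈ CC T₀ (J a) then 1 else 0) := by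
      rw [hP]
      dsimp only
      refine Finset.sum_congr rfl fun S _ => ?_
      rw [hind]
      dsimp only
      rw [haT]
    rw [hPa, h1, Fintype.card_fin, hCCcard T₀ (J a) (haT ▸ (hTTA a).1) (hTTA a).2]
    push_cast
    ring
  -- fiberwise over J
  have hmapsW : ∀ a ∈ W, J a ∈ Finset.range k := fun a _ => Finset.mem_range.2 (hTTA a).2
  set hh : ℕ → ℤ := fun j => ∑ a ∈ W.filter (fun a => J a = j), δ a with hhh
  have hfib : ∀ j, (W.filter (fun a => J a = j)).card ≤ 1 := by
    intro j
    apply Finset.card_le_one.2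
    intro a ha b hb
    have haT : TT a = T₀ := (Finset.mem_filter.1 (Finset.mem_filter.1 ha).1).2
    have haJ : J a = j := (Finset.mem_filter.1 ha).2
    have hbT : TT b = T₀ := (Finset.mem_filter.1 (Finset.mem_filter.1 hb).1).2
    have hbJ : J b = j := (Finset.mem_filter.1 hb).2
    apply ι.injective
    have h1 : TT a = TT b := by rw [haT, hbT]
    have h2 : J a = J b := by rw [haJ, hbJ]
    exact Prod.ext h1 h2
  have hsum0 : ∑ j ∈ Finset.range k, hh j * (D:ℤ)^j = 0 := by
    have h1 : ∑ j ∈ Finset.range k, ∑ a ∈ W.filter (fun a => J a = j),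
        δ a * (2^(t - T₀.card) * (D:ℤ)^(J a)) = 0 := by
      rw [Finset.sum_fiberwise_of_maps_to hmapsW]
      rw [← hsplit]
      exact Finset.sum_congr rfl fun a ha => by rw [hPeq a ha]
    have h2 : ∀ j ∈ Finset.range k, ∑ a ∈ W.filter (fun a => J a = j),
        δ a * (2^(t - T₀.card) * (D:ℤ)^(J a))
        = (2:ℤ)^(t - T₀.card) * (hh j * (D:ℤ)^j) := by
      intro j _
      rw [hhh]
      dsimp only
      rw [Finset.sum_mul, Finset.mul_sum]
      refine Finset.sum_congr rfl fun a ha => ?_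
      rw [(Finset.mem_filter.1 ha).2]
      ring
    have h3 : ∑ j ∈ Finset.range k, (2:ℤ)^(t - T₀.card) * (hh j * (D:ℤ)^j) = 0 := by
      rw [← Finset.sum_congr rfl h2]
      exact h1
    rw [← Finset.mul_sum] at h3
    rcases mul_eq_zero.1 h3 with h | h
    · exact absurd h (by positivity)
    · exact h
  -- contradiction via base-D uniqueness
  have hDz : (D:ℤ) = 2*(d:ℤ) - 1 := by rw [hD]; omega
  have hb : ∀ j, 2 * |hh j| < (D:ℤ) := by
    intro j
    rcases Finset.eq_empty_or_nonempty (W.filter (fun a => J a = j)) with he | ⟨a, ha⟩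
    · rw [hhh]
      dsimp only
      rw [he, Finset.sum_empty, abs_zero, mul_zero]
      omega
    · have hcard : (W.filter (fun a => J a = j)) = {a} := by
        have h1 : (W.filter (fun a => J a = j)).card = 1 :=
          le_antisymm (hfib j) (Finset.card_pos.2 ⟨a, ha⟩)
        obtain ⟨b, hbb⟩ := Finset.card_eq_one.1 h1
        rw [hbb] at ha ⊢
        rw [Finset.mem_singleton.1 ha]
      have heq : hh j = δ a := by rw [hhh]; dsimp only; rw [hcard, Finset.sum_singleton]
      rw [heq]
      have h1 : (f a : ℤ) < d := by exact_mod_cast (f a).isLt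
      have h2 : (g a : ℤ) < d := by exact_mod_cast (g a).isLt
      have h3 : (0:ℤ) ≤ (f a : ℤ) := by positivity
      have h4 : (0:ℤ) ≤ (g a : ℤ) := by positivity
      have hδa : δ a = (f a : ℤ) - (g a : ℤ) := rfl
      rw [hδa, hDz]
      rcases abs_cases ((f a : ℤ) - (g a : ℤ)) with ⟨hc, _⟩ | ⟨hc, _⟩ <;> omega
  have ha₀W : a₀ ∈ W := Finset.mem_filter.2 ⟨ha₀, rfl⟩
  have hne0 : hh (J a₀) ≠ 0 := by
    have hcard : (W.filter (fun a => J a = J a₀)) = {a₀} := by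
      have hmem : a₀ ∈ W.filter (fun a => J a = J a₀) := Finset.mem_filter.2 ⟨ha₀W, rfl⟩
      have h1 : (W.filter (fun a => J a = J a₀)).card = 1 :=
        le_antisymm (hfib _) (Finset.card_pos.2 ⟨a₀, hmem⟩)
      obtain ⟨b, hbb⟩ := Finset.card_eq_one.1 h1
      rw [hbb] at hmem ⊢
      rw [Finset.mem_singleton.1 hmem]
    rw [hhh]
    dsimp only
    rw [hcard, Finset.sum_singleton]
    exact (Finset.mem_filter.1 ha₀).2
  exact baseD_ne_zero D k hh hb (J a₀) (hTTA a₀).2 hne0 hsum0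


end DetectingFamily

/-- Existence of small `d`-detecting families. -/
theorem exists_detecting_family :
    ∃ C : ℝ, 0 < C ∧
      ∀ (α : Type) [Fintype α] [DecidableEq α] (d : ℕ), 2 ≤ d →
        2 ≤ Fintype.card α →
        ∃ F : Finset (Finset α),
          (F.card : ℝ) ≤ C * (Fintype.card α) * Real.log d / Real.log (Fintype.card α) ∧
          ∀ f g : α → Fin d, f ≠ g →
            ∃ S ∈ F, ∑ x ∈ S, (f x : ℕ) ≠ ∑ x ∈ S, (g x : ℕ) := by
  classical
  refine ⟨1024, by norm_num, ?_⟩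
  intro α _ _ d hd hn
  set n := Fintype.card α with hnn
  have hlogn : 0 < Real.log n := Real.log_pos (by exact_mod_cast hn)
  have hlogd : 0 < Real.log d := Real.log_pos (by exact_mod_cast hd)
  have hlog2 : 0 < Real.log 2 := Real.log_pos (by norm_num)
  have hlog2d : Real.log 2 ≤ Real.log d :=
    Real.log_le_log (by norm_num) (by exact_mod_cast hd)
  have hn0 : (0:ℝ) < n := by positivity
  -- parameters
  set r : ℕ := Nat.clog 2 (2*d) with hr
  have hr2 : 2 ≤ r := by
    have h4 : (1:ℕ) < Nat.clog 2 (2*d) :=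
      (Nat.lt_clog_iff_pow_lt (by norm_num)).2 (by omega : 2^1 < 2*d)
    omega
  have hr0 : 0 < r := by omega
  have h2d : 2*d ≤ 2^r := Nat.le_pow_clog (by norm_num) _
  have h2r : 2^r < 4*d := by
    have h1 : 2^(r-1) < 2*d := Nat.pow_pred_clog_lt_self (by norm_num) (by omega)
    have h2 : 2^r = 2 * 2^(r-1) := by
      rw [← pow_succ']
      congr 1
      omega
    omega
  have hrlog : (r:ℝ) * Real.log 2 ≤ 3 * Real.log d := by
    have h1 : ((2:ℝ))^r ≤ 4*d := by exact_mod_cast h2r.le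
    have h2 : Real.log ((2:ℝ)^r) ≤ Real.log (4*d) :=
      Real.log_le_log (by positivity) h1
    rw [Real.log_pow, Real.log_mul (by norm_num) (by positivity)] at h2
    have h4 : Real.log 4 = 2 * Real.log 2 := by
      rw [show (4:ℝ) = 2^2 by norm_num, Real.log_pow]
      push_cast
      ring
    rw [h4] at h2
    nlinarith
  -- minimal u with enough capacity
  have hQex : ∃ u : ℕ, n ≤ 2^(2*u) * (u/r) := by
    refine ⟨r * n, ?_⟩
    rw [Nat.mul_div_cancel_left n hr0]
    calc n = 1 * n := (one_mul n).symm
    _ ≤ 2^(2*(r*n)) * n := Nat.mul_le_mul_right n (Nat.one_le_two_pow)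
  obtain ⟨u₀, hQ, hminimal⟩ :
      ∃ u, (n ≤ 2^(2*u) * (u/r)) ∧ ∀ v < u, ¬(n ≤ 2^(2*v) * (v/r)) :=
    ⟨Nat.find hQex, Nat.find_spec hQex, fun v hv => Nat.find_min hQex hv⟩
  by_cases hcase : u₀ ≤ 4*r
  · -- Case A : singletons suffice
    have hQ4 : n ≤ 2^(8*r) * 4 := by
      have h1 : 2^(2*u₀) ≤ 2^(8*r) := Nat.pow_le_pow_right (by norm_num) (by omega)
      have h2 : u₀/r ≤ (4*r)/r := Nat.div_le_div_right (by omega)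
      have h3 : (4*r)/r = 4 := Nat.mul_div_cancel 4 hr0
      calc n ≤ 2^(2*u₀) * (u₀/r) := hQ
      _ ≤ 2^(8*r) * 4 := Nat.mul_le_mul h1 (h3 ▸ h2)
    have hlognd : Real.log n ≤ 26 * Real.log d := by
      have h1 : (n:ℝ) ≤ 2^(8*r) * 4 := by exact_mod_cast hQ4
      have h2 : Real.log n ≤ Real.log ((2:ℝ)^(8*r) * 4) := Real.log_le_log hn0 h1
      rw [Real.log_mul (by positivity) (by norm_num), Real.log_pow] at h2
      have h4 : Real.log 4 = 2 * Real.log 2 := by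
        rw [show (4:ℝ) = 2^2 by norm_num, Real.log_pow]
        push_cast
        ring
      rw [h4] at h2
      push_cast at h2
      nlinarith
    refine ⟨Finset.univ.image (fun a => ({a} : Finset α)), ?_, ?_⟩
    · have hcard : (Finset.univ.image (fun a => ({a} : Finset α))).card = n := by
        rw [Finset.card_image_of_injective _ Finset.singleton_injective, Finset.card_univ]
      rw [hcard, le_div_iff₀ hlogn]
      have : (n:ℝ) * Real.log n ≤ (n:ℝ) * (26 * Real.log d) :=
        mul_le_mul_of_nonneg_left hlognd (by positivity)
      nlinarith
    · intro f g hfg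
      obtain ⟨a, ha⟩ := Function.ne_iff.1 hfg
      refine ⟨{a}, Finset.mem_image_of_mem _ (Finset.mem_univ a), ?_⟩
      simp only [Finset.sum_singleton]
      intro hc
      exact ha (Fin.ext hc)
  · -- Case B : the detecting-matrix construction
    push_neg at hcase
    set k : ℕ := u₀ / r with hkk
    have hk1 : 1 ≤ k := (Nat.one_le_div_iff hr0).2 (by omega)
    have hkru : k * r ≤ u₀ := Nat.div_mul_le_self u₀ r
    have hkr : (2*d-1)^(k-1) ≤ 2^u₀ := by
      calc (2*d-1)^(k-1) ≤ (2^r)^(k-1) := Nat.pow_le_pow_left (by omega) _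
      _ = 2^(r*(k-1)) := by rw [← pow_mul]
      _ ≤ 2^u₀ := Nat.pow_le_pow_right (by norm_num)
          (le_trans (Nat.mul_le_mul_left r (Nat.sub_le k 1))
            (le_trans (Nat.le_of_eq (Nat.mul_comm r k)) hkru))
    obtain ⟨F, hFcard, hFdet⟩ :=
      DetectingFamily.main_construction α d u₀ k hd hk1 hkr hQ
    refine ⟨F, ?_, hFdet⟩
    -- size bound
    have hmin : ¬ (n ≤ 2^(2*(u₀-1)) * ((u₀-1)/r)) := hminimal _ (by omega)
    push_neg at hmin
    obtain ⟨q, hq⟩ : ∃ q, (u₀-1)/r = q := ⟨_, rfl⟩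
    obtain ⟨m, hm⟩ : ∃ m, (u₀-1) % r = m := ⟨_, rfl⟩
    obtain ⟨P, hP⟩ : ∃ P, r * q = P := ⟨_, rfl⟩
    have hdm : r * ((u₀-1)/r) + (u₀-1) % r = u₀ - 1 := Nat.div_add_mod (u₀-1) r
    rw [hq, hm, hP] at hdm
    have hmr : m < r := hm ▸ Nat.mod_lt (u₀-1) hr0
    have hu2P : u₀ ≤ 2 * P := by omega
    have hmin' : 2^(2*(u₀-1)) * q ≤ n := by rw [← hq]; omega
    -- ℕ inequality : u₀ * 2^(2u₀+1) ≤ 16 r n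
    have hNat : u₀ * 2^(2*u₀+1) ≤ 16 * r * n := by
      have hpow : 2^(2*u₀+1) = 8 * 2^(2*(u₀-1)) := by
        rw [show (8:ℕ) = 2^3 by norm_num, ← pow_add]
        congr 1
        omega
      calc u₀ * 2^(2*u₀+1) ≤ (2*(r*q)) * 2^(2*u₀+1) :=
          Nat.mul_le_mul_right _ (by omega)
      _ = 16 * r * (2^(2*(u₀-1)) * q) := by rw [hpow]; ring
      _ ≤ 16 * r * n := Nat.mul_le_mul_left _ hmin'
    -- pass to reals
    have hu₀R : (0:ℝ) < u₀ := by exact_mod_cast (by omega : 0 < u₀)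
    have hrR : (0:ℝ) < r := by exact_mod_cast hr0
    have hx1 : (u₀:ℝ) * 2^(2*u₀+1) ≤ 16 * r * n := by exact_mod_cast hNat
    have hx2 : Real.log n ≤ 3 * u₀ * Real.log 2 := by
      have h1 : n ≤ 2^(3*u₀) := by
        calc n ≤ 2^(2*u₀) * (u₀/r) := hQ
        _ ≤ 2^(2*u₀) * 2^u₀ := Nat.mul_le_mul_left _
            (le_trans (Nat.div_le_self _ _) (Nat.lt_two_pow_self (n := u₀)).le)
        _ = 2^(3*u₀) := by rw [← pow_add]; congr 1; omega
      have h2 : Real.log n ≤ Real.log ((2:ℝ)^(3*u₀)) :=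
        Real.log_le_log hn0 (by exact_mod_cast h1)
      rw [Real.log_pow] at h2
      push_cast at h2
      linarith
    have hcard2 : (F.card : ℝ) ≤ 2^(2*u₀+1) := by exact_mod_cast hFcard
    rw [le_div_iff₀ hlogn]
    calc (F.card : ℝ) * Real.log n ≤ 2^(2*u₀+1) * Real.log n :=
        mul_le_mul_of_nonneg_right hcard2 hlogn.le
    _ ≤ 1024 * n * Real.log d := by
        have h6 : (r:ℝ) * Real.log n ≤ 9 * u₀ * Real.log d := by
          have h7 : (r:ℝ) * Real.log n ≤ (r:ℝ) * (3 * u₀ * Real.log 2) :=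
            mul_le_mul_of_nonneg_left hx2 hrR.le
          have h8 : (r:ℝ) * (3 * u₀ * Real.log 2) = 3 * u₀ * ((r:ℝ) * Real.log 2) := by ring
          have h9 : 3 * (u₀:ℝ) * ((r:ℝ) * Real.log 2) ≤ 3 * u₀ * (3 * Real.log d) :=
            mul_le_mul_of_nonneg_left hrlog (by positivity)
          nlinarith
        have hA : (u₀:ℝ) * (2^(2*u₀+1) * Real.log n) ≤ (u₀:ℝ) * (1024 * n * Real.log d) :=
          calc (u₀:ℝ) * (2^(2*u₀+1) * Real.log n)
              = ((u₀:ℝ) * 2^(2*u₀+1)) * Real.log n := by ring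
            _ ≤ (16 * r * n) * Real.log n := mul_le_mul_of_nonneg_right hx1 hlogn.le
            _ = 16 * n * ((r:ℝ) * Real.log n) := by ring
            _ ≤ 16 * n * (9 * u₀ * Real.log d) :=
                mul_le_mul_of_nonneg_left h6 (by positivity)
            _ = (u₀:ℝ) * (144 * (n * Real.log d)) := by ring
            _ ≤ (u₀:ℝ) * (1024 * (n * Real.log d)) :=
                mul_le_mul_of_nonneg_left
                  (by nlinarith [mul_pos hn0 hlogd]) hu₀R.le
            _ = (u₀:ℝ) * (1024 * n * Real.log d) := by ring
        exact le_of_mul_le_mul_left hA hu₀R
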